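/- The moment sequence m_n(a,q) = ⟨e_0, J(a,q)^n e_0⟩ satisfies m_0 = 1 and the quadratic recurrence m_{n+1}(a,q) = (a+1) m_n(a,q) + a ∑_{k=0}^{n-1} q^{-k-1} m_k(a,q) m_{n-k-1}(a,q) for n ∈ ℤ₊. -/

import Mathlib

open Finset

/-- Action of the Jacobi matrix `J(a,q)` (with diagonal `βₙ = (a+1)q^{-n}` and
off-diagonal `αₙ = √a q^{-n-1/2}`) on sequences. -/
noncomputable def jacobiApply (a q : ℝ) (f : ℕ → ℝ) : ℕ → ℝ := fun n =>
  (if n = 0 then 0 else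
      Real.sqrt a * q ^ (-(n - 1 : ℕ) : ℤ) / Real.sqrt q * f (n - 1))
    + (a + 1) * q ^ (-(n : ℤ)) * f n
    + Real.sqrt a * q ^ (-(n : ℤ)) / Real.sqrt q * f (n + 1)

/-- Linearity of `jacobiApply` over finite sums. -/
theorem jacobiApply_sum (a q : ℝ) (s : Finset ℕ) (g : ℕ → ℝ) (F : ℕ → ℕ → ℝ) (j : ℕ) :
    jacobiApply a q (fun x => ∑ k ∈ s, g k * F k x) j
      = ∑ k ∈ s, g k * jacobiApply a q (F k) j := by
  simp only [jacobiApply]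
  by_cases h : j = 0 <;>
    simp [h, Finset.mul_sum, Finset.sum_add_distrib, mul_add, mul_left_comm, mul_comm,
      mul_assoc]

/-- Shift/commutation identity: `σ(Jf) = q⁻¹ J(σf) + (√a/√q) f(0) e₀`. -/
theorem jacobiApply_shift (a q : ℝ) (hq : q ≠ 0) (f : ℕ → ℝ) (n : ℕ) :
    jacobiApply a q f (n + 1)
      = q⁻¹ * jacobiApply a q (fun k => f (k + 1)) n
        + (if n = 0 then (Real.sqrt a / Real.sqrt q) * f 0 else 0) := by
  rcases n with _ | n
  · simp only [jacobiApply, Nat.add_sub_cancel, Nat.succ_ne_zero, if_false, if_true,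
      reduceIte, Nat.cast_zero, neg_zero, zpow_zero]
    rw [show (-(0 + 1 : ℕ) : ℤ) = -1 by norm_num, zpow_neg_one]
    ring
  · simp only [jacobiApply, Nat.add_sub_cancel, Nat.succ_ne_zero, if_false, reduceIte]
    rw [show (-(n + 1 + 1 : ℕ) : ℤ) = -(n : ℕ) + -1 + -1 by push_cast; ring,
      show (-(n + 1 : ℕ) : ℤ) = -(n : ℕ) + -1 by push_cast; ring]
    simp only [zpow_add₀ hq, zpow_neg_one]
    ring

/-- The moments `mₙ(a,q) = ⟨e₀, J(a,q)ⁿ e₀⟩` satisfy `m₀ = 1` and the quadratic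
recurrence `m_{n+1} = (a+1) mₙ + a ∑_{k<n} q^{-k-1} m_k m_{n-k-1}`. -/
theorem stmt13 (a q : ℝ) (ha : 0 < a) (hq0 : 0 < q) (hq1 : q < 1)
    (m : ℕ → ℝ)
    (hm : ∀ n : ℕ,
      m n = ((jacobiApply a q)^[n] (fun j => if j = 0 then 1 else 0)) 0) :
    m 0 = 1 ∧ ∀ n : ℕ, m (n + 1) = (a + 1) * m n
      + a * ∑ k ∈ range n, q ^ (-(k : ℤ) - 1) * m k * m (n - k - 1) := by
  have hq' : q ≠ 0 := hq0.ne'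
  set c : ℝ := Real.sqrt a / Real.sqrt q with hc
  set e0 : ℕ → ℝ := fun j => if j = 0 then (1 : ℝ) else 0 with he0
  set v : ℕ → ℕ → ℝ := fun n => (jacobiApply a q)^[n] e0 with hv
  have hmv : ∀ n, m n = v n 0 := hm
  have hc2 : c * c = a / q := by
    rw [hc, div_mul_div_comm, Real.mul_self_sqrt ha.le, Real.mul_self_sqrt hq0.le]
  have hstep : ∀ n, v (n + 1) = jacobiApply a q (v n) := by
    intro n; simp [hv, Function.iterate_succ_apply']
  -- the key identity for the shifted vector
  have key : ∀ n j, v n (j + 1)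
      = c * ∑ k ∈ range n, q ^ (-(k : ℤ)) * v (n - 1 - k) 0 * v k j := by
    intro n
    induction n with
    | zero => intro j; simp [hv, he0]
    | succ n ih =>
      intro j
      have hfun : (fun k => v n (k + 1))
          = fun x => ∑ k ∈ range n,
              (c * (q ^ (-(k : ℤ)) * v (n - 1 - k) 0)) * v k x := by
        funext x
        rw [ih x, Finset.mul_sum]
        exact Finset.sum_congr rfl fun k _ => by ring
      rw [hstep n, jacobiApply_shift a q hq' (v n) j, hfun, jacobiApply_sum]
      rw [Finset.sum_range_succ', mul_add, Finset.mul_sum, Finset.mul_sum]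
      congr 1
      · refine Finset.sum_congr rfl fun k hk => ?_
        rw [show jacobiApply a q (v k) j = v (k + 1) j from by rw [hstep k],
          show (-(k + 1 : ℕ) : ℤ) = -(k : ℕ) + -1 by push_cast; ring,
          zpow_add₀ hq', zpow_neg_one,
          show n + 1 - 1 - (k + 1) = n - 1 - k by omega]
        ring
      · rcases eq_or_ne j 0 with h | h <;> simp [h, hv, he0, hc]
  constructor
  · simpa [hv, he0] using hmv 0
  · intro n
    have h1 : v (n + 1) 0 = (a + 1) * v n 0 + c * v n 1 := by
      rw [hstep n]
      simp only [jacobiApply, if_true, reduceIte, Nat.cast_zero, neg_zero, zpow_zero, hc]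
      ring
    have h2 := key n 0
    calc m (n + 1) = (a + 1) * v n 0 + c * v n 1 := by rw [hmv]; exact h1
      _ = (a + 1) * m n
          + c * (c * ∑ k ∈ range n, q ^ (-(k : ℤ)) * v (n - 1 - k) 0 * v k 0) := by
            rw [hmv n, show v n 1 = v n (0 + 1) from rfl, h2]
      _ = (a + 1) * m n + a * ∑ k ∈ range n, q ^ (-(k : ℤ) - 1) * m k * m (n - k - 1) := by
            rw [← mul_assoc, hc2, Finset.mul_sum, Finset.mul_sum]
            congr 1
            refine Finset.sum_congr rfl fun k hk => ?_
            rw [zpow_sub_one₀ hq', hmv k, hmv (n - k - 1),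
              show n - 1 - k = n - k - 1 by omega]
            field_simp
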